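/- Let V be a left KG_x-module with annihilator I ⊴ KG_x. For m ∈ M_x, the following are equivalent: (i) m ⊗ v = 0 in M_x ⊗_{KG_x} V for all v ∈ V; (ii) ⟨n, m⟩ ∈ I for all n ∈ M_x. Consequently, the annihilator of the induced L_c(X)⋊S-module M_x ⊗_{KG_x} V is {b ∈ L_c(X)⋊S : ⟨n, b·m⟩ ∈ I for all n, m ∈ M_x}. -/

import Mathlib

/-- An inverse semigroup: a semigroup with an involution `star` such that
`a (star a) a = a`, `(star a) a (star a) = star a`, and idempotents commute. -/
class InverseSemigroup (S : Type*) extends Semigroup S, Star S where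
  star_star : ∀ a : S, star (star a) = a
  mul_star_mul : ∀ a : S, a * star a * a = a
  star_mul_star : ∀ a : S, star a * a * star a = star a
  star_mul : ∀ a b : S, star (a * b) = star b * star a
  idem_comm : ∀ e f : S, e * e = e → f * f = f → e * f = f * e

/-- The natural partial order on an inverse semigroup: `s ≤ t` iff `s = t e`
for some idempotent `e`. -/
def ISle {S : Type*} [InverseSemigroup S] (s t : S) : Prop :=
  ∃ e : S, e * e = e ∧ s = t * e

/-- An ample action of an inverse semigroup `S` on a topological space `X`:
a semigroup homomorphism `s ↦ θ s` into partial homeomorphisms between clopen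
subsets of `X` (composition with largest domains encoded via
`PartialEquiv.trans` and `EqOnSource`), with `θ (star s) = (θ s).symm`, whose
domains cover `X`.  (For an ample dynamical system, `X` is moreover assumed
locally compact, Hausdorff and totally disconnected.) -/
structure AmpleSystem (S X : Type*) [InverseSemigroup S] [TopologicalSpace X] where
  θ : S → PartialHomeomorph X X
  hom : ∀ s t : S, (θ (s * t)).toPartialEquiv.EqOnSource
    ((θ t).toPartialEquiv.trans (θ s).toPartialEquiv)
  star_eq : ∀ s : S, (θ (star s)).toPartialEquiv.EqOnSource (θ s).toPartialEquiv.symm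
  clopen : ∀ s : S, IsClopen (θ s).source
  cover : ∀ x : X, ∃ s : S, x ∈ (θ s).source

variable (K : Type*) [Field K]

/-- `L_c(X)`: the locally constant, compactly supported `K`-valued functions
on `X` (a non-unital commutative `K`-algebra under pointwise operations). -/
def LcSet (X : Type*) [TopologicalSpace X] : Set (X → K) :=
  {f | IsLocallyConstant f ∧ HasCompactSupport f}

variable {S X : Type*} [InverseSemigroup S] [TopologicalSpace X]

/-- The globally defined endomorphism `ᾱ_s` of `L_c(X)`:
`ᾱ_s(f) = α_s(f · 1_{X_{s*s}})`, i.e. `(ᾱ_s f)(x) = f (θ_{s*} x)` for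
`x ∈ X_{s s*}` and `0` otherwise. -/
noncomputable def barAlpha (T : AmpleSystem S X) (s : S) (f : X → K) : X → K :=
  (T.θ s).target.indicator (fun x => f ((T.θ s).symm x))

/-- The fiber `B_s = L_c(X_{s s*})` of the semi-direct product bundle:
elements of `L_c(X)` vanishing outside `X_{s s*} = ran θ_s`. -/
def FibSet (T : AmpleSystem S X) (s : S) : Set (X → K) :=
  {f | f ∈ LcSet K X ∧ ∀ x ∉ (T.θ s).target, f x = 0}

/-- `L_c(X_e)` for an idempotent `e`: elements of `L_c(X)` vanishing outside
`X_e = dom θ_e`. -/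
def LcE (T : AmpleSystem S X) (e : S) : Set (X → K) :=
  {f | f ∈ LcSet K X ∧ ∀ x ∉ (T.θ e).source, f x = 0}

/-- A covariant representation `(π, σ)` of an ample dynamical system
`(θ, S, X)` on a `K`-vector space `V`: a non-degenerate representation `π` of
`L_c(X)` and a semigroup homomorphism `σ : S → End(V)` with
`π (α_s f) = σ_s π(f) σ_{s*}` for `f ∈ L_c(X_{s*s})`, and
`span {π(f) ξ : f ∈ L_c(X_e)} = σ_e(V)` for each idempotent `e`.
(`π` is recorded as a map on all of `X → K`; only its values on `L_c(X)` are
constrained.) -/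
structure CovRep (T : AmpleSystem S X) (V : Type*) [AddCommGroup V]
    [Module K V] where
  π : (X → K) → Module.End K V
  σ : S → Module.End K V
  π_add : ∀ f ∈ LcSet K X, ∀ g ∈ LcSet K X, π (f + g) = π f + π g
  π_smul : ∀ (c : K), ∀ f ∈ LcSet K X, π (c • f) = c • π f
  π_mul : ∀ f ∈ LcSet K X, ∀ g ∈ LcSet K X, π (f * g) = π f * π g
  π_nondeg : Submodule.span K {ξ : V | ∃ f ∈ LcSet K X, ∃ η : V, ξ = π f η} = ⊤
  σ_hom : ∀ s t : S, σ (s * t) = σ s * σ t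
  covariant : ∀ s : S, ∀ f ∈ LcE K T (star s * s),
    π (barAlpha K T s f) = σ s * π f * σ (star s)
  essential : ∀ e : S, e * e = e →
    Submodule.span K {ξ : V | ∃ f ∈ LcE K T e, ∃ η : V, ξ = π f η} =
      LinearMap.range (σ e)

/-- The defining relations of the crossed product `L_c(X) ⋊ S`, imposed on the
free `K`-algebra on formal symbols `f δ_s` (`s ∈ S`, `f : X → K`): symbols with
`f ∉ L_c(X_{s s*})` are discarded, the symbols are `K`-linear in `f` on each
fiber, `(f δ_s)(g δ_t) = f ᾱ_s(g) δ_{s t}`, and `f δ_s = f δ_t` whenever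
`s ≤ t` and `f ∈ L_c(X_{s s*})`.  The quotient is precisely the universal
(cross-sectional) algebra of the semi-direct product bundle `B^θ`. -/
inductive CPRel {S X : Type*} [InverseSemigroup S] [TopologicalSpace X]
    (K : Type*) [Field K] (T : AmpleSystem S X) :
    FreeAlgebra K (S × (X → K)) → FreeAlgebra K (S × (X → K)) → Prop
  | zero (s : S) (f : X → K) : f ∉ FibSet K T s →
      CPRel K T (FreeAlgebra.ι K (s, f)) 0
  | add (s : S) (f g : X → K) : f ∈ FibSet K T s → g ∈ FibSet K T s →
      CPRel K T (FreeAlgebra.ι K (s, f + g))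
        (FreeAlgebra.ι K (s, f) + FreeAlgebra.ι K (s, g))
  | smul (s : S) (c : K) (f : X → K) : f ∈ FibSet K T s →
      CPRel K T (FreeAlgebra.ι K (s, c • f)) (c • FreeAlgebra.ι K (s, f))
  | mul (s t : S) (f g : X → K) : f ∈ FibSet K T s → g ∈ FibSet K T t →
      CPRel K T (FreeAlgebra.ι K (s, f) * FreeAlgebra.ι K (t, g))
        (FreeAlgebra.ι K (s * t, f * barAlpha K T s g))
  | incl (s t : S) (f : X → K) : ISle s t → f ∈ FibSet K T s →
      CPRel K T (FreeAlgebra.ι K (s, f)) (FreeAlgebra.ι K (t, f))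

/-- The crossed product algebra `L_c(X) ⋊ S` of an ample dynamical system. -/
abbrev CP {S X : Type*} [InverseSemigroup S] [TopologicalSpace X]
    (K : Type*) [Field K] (T : AmpleSystem S X) :=
  RingQuot (CPRel K T)

/-- The element `f Δ_s` of the crossed product `L_c(X) ⋊ S`. -/
noncomputable def Delta {S X : Type*} [InverseSemigroup S] [TopologicalSpace X]
    (K : Type*) [Field K] (T : AmpleSystem S X) (s : S) (f : X → K) :
    CP K T :=
  RingQuot.mkAlgHom K (CPRel K T) (FreeAlgebra.ι K (s, f))

section Germs

variable {S X : Type*} [InverseSemigroup S] [TopologicalSpace X]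

/-- Germ equivalence at `x`: `s ~ t` iff `s e = t e` for some idempotent `e`
whose domain contains `x`. -/
def GermRel (T : AmpleSystem S X) (x : X) (s t : S) : Prop :=
  ∃ e : S, e * e = e ∧ x ∈ (T.θ e).source ∧ s * e = t * e

/-- `L̃_x`: elements of `S` whose domain contains `x`. -/
def Lt (T : AmpleSystem S X) (x : X) : Type _ :=
  {s : S // x ∈ (T.θ s).source}

/-- `G̃_x`: elements of `S` whose domain contains `x` and which fix `x`. -/
def Gt (T : AmpleSystem S X) (x : X) : Type _ :=
  {s : S // x ∈ (T.θ s).source ∧ T.θ s x = x}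

/-- `L_x`: the set of germs at `x` of elements of `L̃_x`. -/
def Lx (T : AmpleSystem S X) (x : X) : Type _ :=
  Quot (fun a b : Lt T x => GermRel T x a.1 b.1)

/-- `G_x`: the isotropy group at `x`, as a quotient set of `G̃_x` by germ
equivalence. -/
def Gx (T : AmpleSystem S X) (x : X) : Type _ :=
  Quot (fun a b : Gt T x => GermRel T x a.1 b.1)

end Germs

section Germs2

variable {S X : Type*} [InverseSemigroup S] [TopologicalSpace X]

/-- Membership in `G̃_x` as a predicate on `S`. -/
def GtMem (T : AmpleSystem S X) (x : X) (s : S) : Prop :=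
  x ∈ (T.θ s).source ∧ T.θ s x = x

/-- The germ class in `L_x` of an element of `L̃_x`. -/
def mkL (T : AmpleSystem S X) (x : X) (a : Lt T x) : Lx T x := Quot.mk _ a

/-- The germ class in `G_x` of an element of `G̃_x`. -/
def mkG (T : AmpleSystem S X) (x : X) (a : Gt T x) : Gx T x := Quot.mk _ a

end Germs2

/-- `m ⊗ v = 0` in `M_x ⊗_{K G_x} V` for every `v ∈ V`, expressed through the
universal property of the balanced tensor product: every `K G_x`-balanced
`K`-bilinear map `β : M_x × V → W` vanishes on `(m, v)` for all `v`. -/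
def TensorZero {K S X : Type*} [Field K] [InverseSemigroup S]
    [TopologicalSpace X] (T : AmpleSystem S X) (x : X)
    {V : Type} [AddCommGroup V] [Module K V]
    (act : (Lx T x →₀ K) →ₗ[K] (Gx T x →₀ K) →ₗ[K] (Lx T x →₀ K))
    (actV : (Gx T x →₀ K) →ₗ[K] Module.End K V)
    (m : Lx T x →₀ K) : Prop :=
  ∀ (W : Type) (_ : AddCommGroup W) (_ : Module K W)
    (β : (Lx T x →₀ K) →ₗ[K] V →ₗ[K] W),
    (∀ (m' : Lx T x →₀ K) (a : Gx T x →₀ K) (v : V),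
      β (act m' a) v = β m' (actV a v)) →
    ∀ v : V, β m v = 0

section AuxGerm

variable {K S X : Type*} [Field K] [InverseSemigroup S] [TopologicalSpace X]
variable (T : AmpleSystem S X) (x : X)

lemma aux_src_mul (s t : S) (y : X) :
    y ∈ (T.θ (s * t)).source ↔ y ∈ (T.θ t).source ∧ T.θ t y ∈ (T.θ s).source := by
  have h := (T.hom s t).1
  rw [show (T.θ (s * t)).source = ((T.θ t).toPartialEquiv.trans (T.θ s).toPartialEquiv).source
    from h]
  simp [PartialEquiv.trans_source]

lemma aux_apply_mul (s t : S) (y : X) (hy : y ∈ (T.θ (s * t)).source) :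
    T.θ (s * t) y = T.θ s (T.θ t y) :=
  (T.hom s t).2 hy

lemma aux_src_star (s : S) : (T.θ (star s)).source = (T.θ s).target := by
  have h := (T.star_eq s).1
  simpa using h

lemma aux_apply_star (s : S) (y : X) (hy : y ∈ (T.θ s).target) :
    T.θ (star s) y = (T.θ s).symm y := by
  refine (T.star_eq s).2 ?_
  rw [aux_src_star] at *
  exact hy

lemma aux_idem_fix (e : S) (he : e * e = e) (y : X) (hy : y ∈ (T.θ e).source) :
    T.θ e y = y := by
  have hy' : y ∈ (T.θ (e * e)).source := by rw [he]; exact hy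
  have h1 := (aux_src_mul T e e y).1 hy'
  have h2 : T.θ (e * e) y = T.θ e (T.θ e y) := aux_apply_mul T e e y hy'
  rw [he] at h2
  -- θ e y = θ e (θ e y), so by injectivity y = θ e y
  exact ((T.θ e).injOn hy h1.2 h2).symm

lemma aux_idem_mul_star (t : S) : (t * star t) * (t * star t) = t * star t := by
  rw [← mul_assoc, InverseSemigroup.mul_star_mul]

lemma aux_idem_star_mul (t : S) : (star t * t) * (star t * t) = star t * t := by
  rw [← mul_assoc, InverseSemigroup.star_mul_star]

/-- `star t * t ∈ G̃_x` for `t ∈ L̃_x`. -/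
lemma aux_GtMem_star_mul_self (t : S) (ht : x ∈ (T.θ t).source) :
    GtMem T x (star t * t) := by
  have h1 : T.θ t x ∈ (T.θ (star t)).source := by
    rw [aux_src_star]; exact (T.θ t).map_source ht
  have hs : x ∈ (T.θ (star t * t)).source := (aux_src_mul T _ t x).2 ⟨ht, h1⟩
  refine ⟨hs, ?_⟩
  rw [aux_apply_mul T _ t x hs, aux_apply_star T t _ ((T.θ t).map_source ht)]
  exact (T.θ t).left_inv ht

/-- If `star t * s ∈ G̃_x` then `x ∈ dom θ_{t (star t) s}`. -/
lemma aux_src_abs (t s : S) (ht : x ∈ (T.θ t).source) (h : GtMem T x (star t * s)) :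
    x ∈ (T.θ (t * (star t * s))).source := by
  obtain ⟨h1, h2⟩ := h
  refine (aux_src_mul T t (star t * s) x).2 ⟨h1, ?_⟩
  rw [h2]; exact ht

/-- The idempotent `e = s* (t t*) s` is idempotent. -/
lemma aux_e_idem (t s : S) :
    (star s * (t * star t) * s) * (star s * (t * star t) * s)
      = star s * (t * star t) * s := by
  have hg : (t * star t) * (t * star t) = t * star t := aux_idem_mul_star t
  have hf : (s * star s) * (s * star s) = s * star s := aux_idem_mul_star s
  have hc := InverseSemigroup.idem_comm _ _ hg hf
  -- e e = s* g (s s*) g s = s* (g f g) s = s* (g f) s = s* g (f s) = s* g s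
  have key : (t * star t) * ((s * star s) * (t * star t)) = (t * star t) * (s * star s) := by
    rw [← hc, ← mul_assoc, hg]
  calc (star s * (t * star t) * s) * (star s * (t * star t) * s)
      = star s * ((t * star t) * ((s * star s) * ((t * star t) * s))) := by
        simp only [mul_assoc]
    _ = star s * ((t * star t) * ((s * star s) * (t * star t) * s)) := by
        simp only [mul_assoc]
    _ = star s * (((t * star t) * ((s * star s) * (t * star t))) * s) := by
        simp only [mul_assoc]
    _ = star s * (((t * star t) * (s * star s)) * s) := by rw [key]
    _ = star s * ((t * star t) * (s * (star s * s))) := by simp only [mul_assoc]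
    _ = star s * ((t * star t) * s) := by
        rw [show s * (star s * s) = s by rw [← mul_assoc, InverseSemigroup.mul_star_mul]]
    _ = star s * (t * star t) * s := by simp only [mul_assoc]

/-- `(t t* s) e = s e` for `e = s* (t t*) s`. -/
lemma aux_e_eq (t s : S) :
    (t * (star t * s)) * (star s * (t * star t) * s) = s * (star s * (t * star t) * s) := by
  have hg : (t * star t) * (t * star t) = t * star t := aux_idem_mul_star t
  have hf : (s * star s) * (s * star s) = s * star s := aux_idem_mul_star s
  have hc := InverseSemigroup.idem_comm _ _ hg hf
  have hss : s * (star s * s) = s := by rw [← mul_assoc, InverseSemigroup.mul_star_mul]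
  -- LHS = g (s s*) g s = (g f g) s = (g f) s = g (f s) = g s
  -- RHS = (s s*) g s = f g s = g f s = g s
  have lhs : (t * (star t * s)) * (star s * (t * star t) * s)
      = (t * star t) * ((s * star s) * ((t * star t) * s)) := by
    simp only [mul_assoc]
  have rhs : s * (star s * (t * star t) * s)
      = (s * star s) * ((t * star t) * s) := by simp only [mul_assoc]
  rw [lhs, rhs]
  have key : (t * star t) * ((s * star s) * (t * star t)) = (s * star s) * (t * star t) := by
    rw [← hc, ← mul_assoc, hg, hc]
  calc (t * star t) * ((s * star s) * ((t * star t) * s))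
      = ((t * star t) * ((s * star s) * (t * star t))) * s := by simp only [mul_assoc]
    _ = ((s * star s) * (t * star t)) * s := by rw [key]
    _ = (s * star s) * ((t * star t) * s) := by simp only [mul_assoc]

/-- `x ∈ dom θ_e` for `e = s* (t t*) s`, when `x ∈ dom θ_s` and `star t * s ∈ G̃_x`. -/
lemma aux_e_src (t s : S) (hs : x ∈ (T.θ s).source) (h : GtMem T x (star t * s)) :
    x ∈ (T.θ (star s * (t * star t) * s)).source := by
  obtain ⟨h1, _⟩ := h
  -- θ s x ∈ source θ (star t) = target θ t
  have hts : T.θ s x ∈ (T.θ (star t)).source := ((aux_src_mul T (star t) s x).1 h1).2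
  have htt : T.θ s x ∈ (T.θ t).target := by rwa [aux_src_star] at hts
  -- θ s x ∈ source θ (t * star t)
  have h2 : T.θ s x ∈ (T.θ (t * star t)).source := by
    refine (aux_src_mul T t (star t) _).2 ⟨hts, ?_⟩
    rw [aux_apply_star T t _ htt]
    exact (T.θ t).map_target htt
  have h3 : T.θ (t * star t) (T.θ s x) = T.θ s x :=
    aux_idem_fix T (t * star t) (aux_idem_mul_star t) _ h2
  refine (aux_src_mul T (star s * (t * star t)) s x).2 ⟨hs, ?_⟩
  refine (aux_src_mul T (star s) (t * star t) _).2 ⟨h2, ?_⟩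
  rw [h3, aux_src_star]
  exact (T.θ s).map_source hs

end AuxGerm

/-- Let `V` be a left `K G_x`-module (action `actV`, compatible
with the convolution product `mG` of `K G_x` and unital on idempotent germs)
with annihilator `I = {a : K G_x | a • V = 0}`.  The bimodule `M_x = L_x →₀ K`
carries the right `K G_x`-action `act`, the `K G_x`-valued pairing `p`
(satisfying `⟨m, n a⟩ = ⟨m, n⟩ a`), and the left `L_c(X) ⋊ S`-action `actL`.
Then for `m ∈ M_x` the following are equivalent: (i) `m ⊗ v = 0` in
`M_x ⊗_{K G_x} V` for all `v ∈ V`; (ii) `⟨n, m⟩ ∈ I` for all `n ∈ M_x`.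
Consequently the annihilator of the induced module `M_x ⊗_{K G_x} V` in
`L_c(X) ⋊ S` is `{b : ⟨n, b·m⟩ ∈ I for all n, m ∈ M_x}`. -/
theorem induced_module_annihilator
    {K S X : Type*} [Field K] [InverseSemigroup S] [TopologicalSpace X]
    (T : AmpleSystem S X) (x : X)
    -- the convolution product of K G_x
    (mG : (Gx T x →₀ K) →ₗ[K] (Gx T x →₀ K) →ₗ[K] (Gx T x →₀ K))
    (hmG : ∀ (a b : Gt T x)
      (h : x ∈ (T.θ (a.1 * b.1)).source ∧ T.θ (a.1 * b.1) x = x),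
      mG (Finsupp.single (mkG T x a) 1) (Finsupp.single (mkG T x b) 1) =
        Finsupp.single (mkG T x ⟨a.1 * b.1, h⟩) 1)
    -- the K G_x-valued pairing on M_x
    (p : (Lx T x →₀ K) →ₗ[K] (Lx T x →₀ K) →ₗ[K] (Gx T x →₀ K))
    (hp : ∀ a b : Lt T x,
      (∀ h : GtMem T x (star a.1 * b.1),
        p (Finsupp.single (mkL T x a) 1) (Finsupp.single (mkL T x b) 1) =
          Finsupp.single (mkG T x ⟨star a.1 * b.1, h⟩) 1) ∧
      (¬ GtMem T x (star a.1 * b.1) →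
        p (Finsupp.single (mkL T x a) 1) (Finsupp.single (mkL T x b) 1) = 0))
    -- the right K G_x-action on M_x
    (act : (Lx T x →₀ K) →ₗ[K] (Gx T x →₀ K) →ₗ[K] (Lx T x →₀ K))
    (hact : ∀ (a : Lt T x) (b : Gt T x) (h : x ∈ (T.θ (a.1 * b.1)).source),
      act (Finsupp.single (mkL T x a) 1) (Finsupp.single (mkG T x b) 1) =
        Finsupp.single (mkL T x (⟨a.1 * b.1, h⟩ : Lt T x)) 1)
    (hpbal : ∀ (m n : Lx T x →₀ K) (a : Gx T x →₀ K),
      p m (act n a) = mG (p m n) a)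
    -- the left L_c(X) ⋊ S-action on M_x
    (actL : CP K T →ₗ[K] Module.End K (Lx T x →₀ K))
    (hactL_mul : ∀ a b : CP K T, actL (a * b) = actL a * actL b)
    (hactL : ∀ (s : S), ∀ f ∈ FibSet K T s, ∀ t : Lt T x,
      (∀ h : x ∈ (T.θ (s * t.1)).source,
        actL (Delta K T s f) (Finsupp.single (mkL T x t) 1) =
          f (T.θ (s * t.1) x) •
            Finsupp.single (mkL T x (⟨s * t.1, h⟩ : Lt T x)) 1) ∧
      (x ∉ (T.θ (s * t.1)).source →
        actL (Delta K T s f) (Finsupp.single (mkL T x t) 1) = 0))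
    -- the left K G_x-module V
    {V : Type} [AddCommGroup V] [Module K V]
    (actV : (Gx T x →₀ K) →ₗ[K] Module.End K V)
    (hactV_mul : ∀ a b : Gx T x →₀ K, actV (mG a b) = actV a * actV b)
    (hactV_one : ∀ (e : S) (h : GtMem T x e), e * e = e →
      actV (Finsupp.single (mkG T x ⟨e, h⟩) 1) = 1) :
    (∀ m : Lx T x →₀ K,
      TensorZero T x act actV m ↔ ∀ n : Lx T x →₀ K, actV (p n m) = 0) ∧
    (∀ b : CP K T,
      (∀ m : Lx T x →₀ K, TensorZero T x act actV (actL b m)) ↔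
      ∀ n m : Lx T x →₀ K, actV (p n (actL b m)) = 0) := by
  classical
  -- choose representatives of germ classes
  have hrep : ∀ a : Lx T x, ∃ t : Lt T x, mkL T x t = a := fun a => Quot.exists_rep a
  choose rep hrep using hrep
  -- key single computation
  have hsingle : ∀ a b : Lx T x,
      act (Finsupp.single a 1) (p (Finsupp.single a 1) (Finsupp.single b (1 : K)))
        = if GtMem T x (star (rep a).1 * (rep b).1) then Finsupp.single b 1 else 0 := by
    intro a b
    by_cases hQ : GtMem T x (star (rep a).1 * (rep b).1)
    · rw [if_pos hQ]
      have h1 := (hp (rep a) (rep b)).1 hQ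
      have hsrc := aux_src_abs T x (rep a).1 (rep b).1 (rep a).2 hQ
      have h2 := hact (rep a) ⟨star (rep a).1 * (rep b).1, hQ⟩ hsrc
      have h3 : mkL T x (⟨(rep a).1 * (star (rep a).1 * (rep b).1), hsrc⟩ : Lt T x)
          = mkL T x (rep b) :=
        Quot.sound ⟨star (rep b).1 * ((rep a).1 * star (rep a).1) * (rep b).1,
          aux_e_idem _ _, aux_e_src T x _ _ (rep b).2 hQ, aux_e_eq _ _⟩
      calc act (Finsupp.single a 1) (p (Finsupp.single a 1) (Finsupp.single b 1))
          = act (Finsupp.single (mkL T x (rep a)) 1)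
              (p (Finsupp.single (mkL T x (rep a)) 1)
                (Finsupp.single (mkL T x (rep b)) 1)) := by rw [hrep a, hrep b]
        _ = act (Finsupp.single (mkL T x (rep a)) 1)
              (Finsupp.single (mkG T x ⟨star (rep a).1 * (rep b).1, hQ⟩) 1) := by rw [h1]
        _ = Finsupp.single
              (mkL T x (⟨(rep a).1 * (star (rep a).1 * (rep b).1), hsrc⟩ : Lt T x)) 1 := h2
        _ = Finsupp.single (mkL T x (rep b)) 1 := by rw [h3]
        _ = Finsupp.single b 1 := by rw [hrep b]
    · rw [if_neg hQ]
      have h1 := (hp (rep a) (rep b)).2 hQ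
      rw [← hrep a, ← hrep b, h1, map_zero]
  -- induction on the size of the support
  have key : ∀ (N : ℕ) (m : Lx T x →₀ K), m.support.card ≤ N →
      (∀ n, actV (p n m) = 0) → TensorZero T x act actV m := by
    intro N
    induction N with
    | zero =>
      intro m hc _
      have hm : m = 0 := by
        rwa [Nat.le_zero, Finset.card_eq_zero, Finsupp.support_eq_empty] at hc
      subst hm
      intro W iW1 iW2 β hβ v
      simp
    | succ N ih =>
      intro m hc hann
      by_cases hm0 : m = 0
      · subst hm0
        intro W iW1 iW2 β hβ v
        simp
      · obtain ⟨a, ha⟩ := Finsupp.support_nonempty_iff.mpr hm0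
        have hmsum : m = ∑ b ∈ m.support, Finsupp.single b (m b) :=
          (Finsupp.sum_single m).symm
        have hcorr_eq : act (Finsupp.single a 1) (p (Finsupp.single a 1) m)
            = ∑ b ∈ m.support,
                if GtMem T x (star (rep a).1 * (rep b).1)
                then Finsupp.single b (m b) else 0 := by
          conv_lhs => rw [hmsum]
          rw [map_sum, map_sum]
          refine Finset.sum_congr rfl ?_
          intro b _
          have hb : Finsupp.single b (m b) = m b • Finsupp.single b (1 : K) := by
            rw [Finsupp.smul_single, smul_eq_mul, mul_one]
          rw [hb, map_smul, map_smul, hsingle a b]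
          split_ifs with h
          · rw [← hb]
          · rw [smul_zero]
        have hcorr_apply : ∀ c,
            (act (Finsupp.single a 1) (p (Finsupp.single a 1) m)) c
              = if GtMem T x (star (rep a).1 * (rep c).1) then m c else 0 := by
          intro c
          rw [hcorr_eq, Finsupp.finset_sum_apply]
          by_cases hcs : c ∈ m.support
          · rw [Finset.sum_eq_single c]
            · split_ifs with h <;> simp [Finsupp.single_eq_same]
            · intro b hb hbc
              split_ifs with h
              · simp [Finsupp.single_eq_of_ne' hbc]
              · rfl
            · intro h; exact absurd hcs h
          · have hmc : m c = 0 := Finsupp.notMem_support_iff.mp hcs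
            rw [hmc]
            rw [Finset.sum_eq_zero, ite_self]
            intro b hb
            have hbc : b ≠ c := fun h => hcs (h ▸ hb)
            split_ifs with h
            · simp [Finsupp.single_eq_of_ne' hbc]
            · rfl
        set m' : Lx T x →₀ K :=
          m - act (Finsupp.single a 1) (p (Finsupp.single a 1) m) with hm'def
        have hm'_apply : ∀ c, m' c
            = if GtMem T x (star (rep a).1 * (rep c).1) then 0 else m c := by
          intro c
          rw [hm'def, Finsupp.sub_apply, hcorr_apply c]
          split_ifs with h
          · rw [sub_self]
          · rw [sub_zero]
        have hQaa : GtMem T x (star (rep a).1 * (rep a).1) :=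
          aux_GtMem_star_mul_self T x (rep a).1 (rep a).2
        have hsub : m'.support ⊆ m.support.erase a := by
          intro c hcs
          rw [Finsupp.mem_support_iff] at hcs
          rw [Finset.mem_erase, Finsupp.mem_support_iff]
          constructor
          · intro hca
            apply hcs
            rw [hca, hm'_apply a, if_pos hQaa]
          · intro hmc
            apply hcs
            rw [hm'_apply c, hmc, ite_self]
        have hcard : m'.support.card ≤ N := by
          have h1 := Finset.card_le_card hsub
          have h2 := Finset.card_erase_of_mem ha
          have h3 : 0 < m.support.card := Finset.card_pos.mpr ⟨a, ha⟩
          omega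
        have hann' : ∀ n, actV (p n m') = 0 := by
          intro n
          rw [hm'def, map_sub, hpbal, map_sub, hactV_mul, hann n,
            hann (Finsupp.single a 1)]
          simp
        intro W iW1 iW2 β hβ v
        have hIH := ih m' hcard hann' W iW1 iW2 β hβ v
        have hdec : m = m' + act (Finsupp.single a 1) (p (Finsupp.single a 1) m) := by
          rw [hm'def, sub_add_cancel]
        have hβcorr : β (act (Finsupp.single a 1) (p (Finsupp.single a 1) m)) v
            = β (Finsupp.single a 1) (actV (p (Finsupp.single a 1) m) v) :=
          hβ _ _ v
        rw [hann (Finsupp.single a 1)] at hβcorr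
        calc β m v
            = β m' v + β (act (Finsupp.single a 1) (p (Finsupp.single a 1) m)) v := by
              conv_lhs => rw [hdec]
              rw [map_add, LinearMap.add_apply]
          _ = 0 := by
              rw [hIH, hβcorr]
              simp
  -- the main equivalence
  have main : ∀ m : Lx T x →₀ K,
      TensorZero T x act actV m ↔ ∀ n : Lx T x →₀ K, actV (p n m) = 0 := by
    intro m
    constructor
    · intro hTZ n
      apply LinearMap.ext
      intro v
      let β : (Lx T x →₀ K) →ₗ[K] V →ₗ[K] V :=
        { toFun := fun m' => actV (p n m')
          map_add' := by intro a b; simp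
          map_smul' := by intro c a; simp }
      have hbal : ∀ (m' : Lx T x →₀ K) (g : Gx T x →₀ K) (w : V),
          β (act m' g) w = β m' (actV g w) := by
        intro m' g w
        show actV (p n (act m' g)) w = actV (p n m') (actV g w)
        rw [hpbal, hactV_mul]
        rfl
      have := hTZ V inferInstance inferInstance β hbal v
      simpa [β] using this
    · intro h
      exact key m.support.card m le_rfl h
  refine ⟨main, fun b => ⟨fun h n m => (main _).mp (h m) n,
    fun h m => (main _).mpr fun n => h n m⟩⟩
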